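/- Let X be a reflexive real Banach space, let D be a nonempty subset of X, let K : D → X*, and let M : X → 2^{X*}. If K + M is maximally monotone and D ∩ dom M is bounded, then ran K ⊂ ran(K + M); in fact K + M is surjective (ran(K+M) = X*). -/

import Mathlib

open NormedSpace

/-- The operator `K + M` with domain `D`: it maps `x ∈ D` to `{K x + u : u ∈ M x}`
and `x ∉ D` to `∅`. -/
def sumOp {X : Type*} [NormedAddCommGroup X] [NormedSpace ℝ X]
    (D : Set X) (K : X → StrongDual ℝ X) (M : X → Set (StrongDual ℝ X)) : X → Set (StrongDual ℝ X) :=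
  fun x => {w | x ∈ D ∧ ∃ u ∈ M x, w = K x + u}

/-- Monotonicity of a set-valued operator from a Banach space into its dual. -/
def BMono {X : Type*} [NormedAddCommGroup X] [NormedSpace ℝ X]
    (A : X → Set (StrongDual ℝ X)) : Prop :=
  ∀ x y u v, u ∈ A x → v ∈ A y → (0:ℝ) ≤ (u - v) (x - y)

/-- Maximal monotonicity of a set-valued operator from a Banach space into its dual. -/
def BMaxMono {X : Type*} [NormedAddCommGroup X] [NormedSpace ℝ X]
    (A : X → Set (StrongDual ℝ X)) : Prop :=
  BMono A ∧ ∀ A', BMono A' → (∀ x, A x ⊆ A' x) → ∀ x, A' x ⊆ A x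

/-- Matrix game lemma: if the quadratic form of `a` is nonpositive on the standard
simplex, then some mixed strategy has all "row payoffs" nonpositive. -/
lemma game_lemma {ι : Type*} [Fintype ι] [Nonempty ι] (a : ι → ι → ℝ)
    (h : ∀ l ∈ stdSimplex ℝ ι, ∑ i, ∑ j, l i * l j * a i j ≤ 0) :
    ∃ l ∈ stdSimplex ℝ ι, ∀ i, ∑ j, l j * a i j ≤ 0 := by
  classical
  by_contra hcon
  push_neg at hcon
  set T : (ι → ℝ) →ₗ[ℝ] (ι → ℝ) :=
    LinearMap.pi (fun i => ∑ j, a i j • LinearMap.proj j) with hT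
  have hTapp : ∀ l i, T l i = ∑ j, l j * a i j := by
    intro l i
    simp [hT, LinearMap.pi_apply, LinearMap.sum_apply, LinearMap.smul_apply,
      LinearMap.proj_apply, smul_eq_mul, mul_comm]
  set s : Set (ι → ℝ) := T '' stdSimplex ℝ ι with hs
  set t : Set (ι → ℝ) := {x | ∀ i, x i ≤ 0} with ht
  have htclosed : IsClosed t := by
    have : t = ⋂ i, {x : ι → ℝ | x i ≤ 0} := by
      ext x; simp [ht]
    rw [this]
    exact isClosed_iInter fun i => isClosed_le (continuous_apply i) continuous_const
  have htconvex : Convex ℝ t := by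
    intro x hx y hy α β hα hβ hαβ i
    have := hx i
    have := hy i
    simp only [Pi.add_apply, Pi.smul_apply, smul_eq_mul]
    nlinarith
  have hscompact : IsCompact s := (isCompact_stdSimplex ℝ ι).image
    (LinearMap.continuous_of_finiteDimensional T)
  have hsconvex : Convex ℝ s := (convex_stdSimplex ℝ ι).linear_image T
  have hdisj : Disjoint t s := by
    rw [Set.disjoint_right]
    rintro x ⟨l, hl, rfl⟩ hxt
    obtain ⟨i, hi⟩ := hcon l hl
    have := hxt i
    rw [hTapp] at this
    linarith
  obtain ⟨f, u, v, h1, h2, h3⟩ :=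
    geometric_hahn_banach_closed_compact htconvex htclosed hsconvex hscompact hdisj
  have hu0 : 0 < u := by
    have : f 0 < u := h1 0 (fun i => le_rfl)
    simpa using this
  set e : ι → ι → ℝ := fun i => (fun j => if i = j then (1:ℝ) else 0) with he
  set μ : ι → ℝ := fun i => f (e i) with hμdef
  have hμnn : ∀ i, 0 ≤ μ i := by
    intro i
    by_contra hneg
    push_neg at hneg
    set c : ℝ := (u + 1) / (-μ i) with hc
    have hμpos : 0 < -μ i := by linarith
    have hc0 : 0 ≤ c := by positivity
    have hmem : (-c) • e i ∈ t := by
      intro j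
      simp only [Pi.smul_apply, smul_eq_mul, he]
      rcases eq_or_ne i j with rfl | hne
      · simp; linarith
      · simp [hne]
    have h1' := h1 _ hmem
    rw [map_smul, smul_eq_mul] at h1'
    have hval : u + 1 ≤ (-c) * μ i := by
      have hrw : (-c) * μ i = c * (-μ i) := by ring
      rw [hrw, hc, div_mul_cancel₀ _ (ne_of_gt hμpos)]
    linarith
  have hf : ∀ x : ι → ℝ, f x = ∑ i, x i * μ i := by
    intro x
    conv_lhs => rw [pi_eq_sum_univ x, map_sum]
    refine Finset.sum_congr rfl fun i _ => ?_
    rw [map_smul, smul_eq_mul]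
  have hne : ∃ i, 0 < μ i := by
    by_contra hz
    push_neg at hz
    have hμ0 : ∀ i, μ i = 0 := fun i => le_antisymm (hz i) (hμnn i)
    obtain ⟨i0⟩ := ‹Nonempty ι›
    have hmem : e i0 ∈ stdSimplex ℝ ι := ite_eq_mem_stdSimplex ℝ i0
    have hv := h3 _ ⟨_, hmem, rfl⟩
    rw [hf] at hv
    simp [hμ0] at hv
    linarith
  set S := ∑ i, μ i with hS
  have hSpos : 0 < S := by
    obtain ⟨i, hi⟩ := hne
    exact Finset.sum_pos' (fun j _ => hμnn j) ⟨i, Finset.mem_univ i, hi⟩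
  set l : ι → ℝ := fun i => μ i / S with hl_def
  have hl : l ∈ stdSimplex ℝ ι := by
    refine ⟨fun i => div_nonneg (hμnn i) hSpos.le, ?_⟩
    rw [← Finset.sum_div, ← hS, div_self (ne_of_gt hSpos)]
  have hli : ∀ i, S * l i = μ i := by
    intro i
    simp only [hl_def]
    rw [mul_comm, div_mul_cancel₀ _ (ne_of_gt hSpos)]
  have hval := h3 _ ⟨l, hl, rfl⟩
  have hfTl : f (T l) ≤ 0 := by
    rw [hf]
    have hrw : ∑ i, T l i * μ i = S * ∑ i, ∑ j, l i * l j * a i j := by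
      rw [Finset.mul_sum]
      refine Finset.sum_congr rfl fun i _ => ?_
      rw [hTapp, Finset.sum_mul, Finset.mul_sum]
      refine Finset.sum_congr rfl fun j _ => ?_
      rw [← hli i]; ring
    rw [hrw]
    have := h l hl
    nlinarith
  linarith

/-- For a monotone operator, given a finite subgraph within a ball of radius `R`,
there is a point of the ball monotonically related to it (w.r.t. a target `w`). -/
lemma finite_related {X : Type*} [NormedAddCommGroup X] [NormedSpace ℝ X]
    {A : X → Set (StrongDual ℝ X)} (hA : BMono A) (w : StrongDual ℝ X)
    {ι : Type*} [Fintype ι] [Nonempty ι] (y : ι → X) (v : ι → StrongDual ℝ X)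
    (hv : ∀ i, v i ∈ A (y i)) {R : ℝ} (hR : ∀ i, ‖y i‖ ≤ R) :
    ∃ x₀ : X, ‖x₀‖ ≤ R ∧ ∀ i, 0 ≤ (w - v i) (x₀ - y i) := by
  set a : ι → ι → ℝ := fun i j => (v i - w) (y j - y i) with ha
  have key : ∀ i j, a i j + a j i ≤ 0 := by
    intro i j
    have hmono := hA (y i) (y j) (v i) (v j) (hv i) (hv j)
    have hrw : a i j + a j i = -((v i - v j) (y i - y j)) := by
      simp only [ha, ContinuousLinearMap.sub_apply, map_sub]
      ring
    rw [hrw]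
    linarith
  have hq : ∀ l ∈ stdSimplex ℝ ι, ∑ i, ∑ j, l i * l j * a i j ≤ 0 := by
    intro l hl
    have h2 : (2:ℝ) * (∑ i, ∑ j, l i * l j * a i j)
        = ∑ i, ∑ j, l i * l j * (a i j + a j i) := by
      have hswap : ∑ i, ∑ j, l i * l j * a i j = ∑ i, ∑ j, l j * l i * a j i :=
        Finset.sum_comm
      calc (2:ℝ) * (∑ i, ∑ j, l i * l j * a i j)
          = (∑ i, ∑ j, l i * l j * a i j) + ∑ i, ∑ j, l j * l i * a j i := by
            rw [← hswap]; ring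
        _ = ∑ i, ∑ j, (l i * l j * a i j + l j * l i * a j i) := by
            rw [← Finset.sum_add_distrib]
            exact Finset.sum_congr rfl fun i _ => (Finset.sum_add_distrib).symm
        _ = ∑ i, ∑ j, l i * l j * (a i j + a j i) := by
            refine Finset.sum_congr rfl fun i _ => Finset.sum_congr rfl fun j _ => ?_
            ring
    have hterm : ∑ i, ∑ j, l i * l j * (a i j + a j i) ≤ 0 := by
      refine Finset.sum_nonpos fun i _ => Finset.sum_nonpos fun j _ => ?_
      have hnn : 0 ≤ l i * l j := mul_nonneg (hl.1 i) (hl.1 j)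
      nlinarith [key i j]
    linarith
  obtain ⟨l, hl, hlrow⟩ := game_lemma a hq
  refine ⟨∑ j, l j • y j, ?_, ?_⟩
  · calc ‖∑ j, l j • y j‖ ≤ ∑ j, ‖l j • y j‖ := norm_sum_le _ _
      _ ≤ ∑ j, l j * R := by
          refine Finset.sum_le_sum fun j _ => ?_
          rw [norm_smul, Real.norm_of_nonneg (hl.1 j)]
          exact mul_le_mul_of_nonneg_left (hR j) (hl.1 j)
      _ = R := by rw [← Finset.sum_mul, hl.2, one_mul]
  · intro i
    have hdiff : (∑ j, l j • y j) - y i = ∑ j, l j • (y j - y i) := by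
      simp only [smul_sub, Finset.sum_sub_distrib, ← Finset.sum_smul, hl.2, one_smul]
    rw [hdiff, map_sum]
    have hterm : ∀ j, (w - v i) (l j • (y j - y i)) = l j * (-(a i j)) := by
      intro j
      rw [map_smul, smul_eq_mul]
      congr 1
      simp only [ha, ContinuousLinearMap.sub_apply]
      ring
    rw [Finset.sum_congr rfl fun j _ => hterm j]
    have : ∑ j, l j * (-(a i j)) = -(∑ j, l j * a i j) := by
      rw [← Finset.sum_neg_distrib]
      exact Finset.sum_congr rfl fun j _ => by ring
    rw [this]
    linarith [hlrow i]

/-- In a reflexive space, a monotone operator with bounded domain admits, for every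
target functional `w`, a point monotonically related to its whole graph. -/
lemma exists_related {X : Type*} [NormedAddCommGroup X] [NormedSpace ℝ X]
    (hrefl : Function.Surjective ⇑(inclusionInDoubleDual ℝ X))
    {A : X → Set (StrongDual ℝ X)} (hA : BMono A) (w : StrongDual ℝ X)
    {xb : X} {vb : StrongDual ℝ X} (hxb : vb ∈ A xb)
    {R : ℝ} (hR : ∀ x, (A x).Nonempty → ‖x‖ ≤ R) :
    ∃ x₀ : X, ∀ y v, v ∈ A y → 0 ≤ (w - v) (x₀ - y) := by
  set ι := {p : X × StrongDual ℝ X // p.2 ∈ A p.1} with hι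
  have i₀ : ι := ⟨(xb, vb), hxb⟩
  set s : Set (WeakDual ℝ (StrongDual ℝ X)) :=
    WeakDual.toStrongDual ⁻¹' Metric.closedBall 0 R with hs
  set t : ι → Set (WeakDual ℝ (StrongDual ℝ X)) :=
    fun p => {Φ | (w - p.1.2) p.1.1 ≤ Φ (w - p.1.2)} with htdef
  have htclosed : ∀ p, IsClosed (t p) :=
    fun p => isClosed_le continuous_const (WeakDual.eval_continuous _)
  have hscompact : IsCompact s := WeakDual.isCompact_closedBall (𝕜 := ℝ) (E := StrongDual ℝ X) 0 R
  have hfip : ∀ u : Finset ι, (s ∩ ⋂ i ∈ u, t i).Nonempty := by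
    intro u
    classical
    set u' : Finset ι := insert i₀ u with hu'
    haveI : Nonempty ↥u' := ⟨⟨i₀, Finset.mem_insert_self _ _⟩⟩
    obtain ⟨x₀, hx₀norm, hx₀⟩ := finite_related hA w
      (fun i : ↥u' => (i : ι).1.1) (fun i : ↥u' => (i : ι).1.2)
      (fun i => (i : ι).2)
      (fun i => hR _ ⟨_, (i : ι).2⟩)
    refine ⟨StrongDual.toWeakDual (inclusionInDoubleDual ℝ X x₀), ?_, ?_⟩
    · simp only [hs, Set.mem_preimage]
      rw [Metric.mem_closedBall]
      change dist (inclusionInDoubleDual ℝ X x₀) (0 : StrongDual ℝ (StrongDual ℝ X)) ≤ R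
      exact (dist_zero_right (inclusionInDoubleDual ℝ X x₀)).le.trans <| le_trans (NormedSpace.double_dual_bound ℝ X x₀) hx₀norm
    · simp only [Set.mem_iInter]
      intro i hi
      have := hx₀ ⟨i, Finset.mem_insert_of_mem hi⟩
      simp only [htdef, Set.mem_setOf_eq]
      have heval : (StrongDual.toWeakDual (inclusionInDoubleDual ℝ X x₀))
          (w - i.1.2) = (w - i.1.2) x₀ := rfl
      rw [heval]
      have hsub := map_sub (w - i.1.2) x₀ i.1.1
      rw [hsub] at this
      linarith
  obtain ⟨Φ, hΦs, hΦt⟩ := hscompact.inter_iInter_nonempty t htclosed hfip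
  obtain ⟨x₀, hx₀⟩ := hrefl (WeakDual.toStrongDual Φ)
  refine ⟨x₀, fun y v hv => ?_⟩
  have hmem : Φ ∈ t ⟨(y, v), hv⟩ := Set.mem_iInter.mp hΦt ⟨(y, v), hv⟩
  simp only [htdef, Set.mem_setOf_eq] at hmem
  have heval : Φ (w - v) = (w - v) x₀ := by
    have : (WeakDual.toStrongDual Φ) (w - v) = Φ (w - v) := rfl
    rw [← this, ← hx₀]
    rfl
  rw [heval] at hmem
  rw [map_sub]
  linarith

/-- Proposition 3.10(i)[b]: if `K + M` is maximally monotone and `D ∩ dom M` is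
bounded, then `K + M` is surjective; in particular `ran K ⊆ ran (K + M)`. -/
theorem stmt_11
    {X : Type*} [NormedAddCommGroup X] [NormedSpace ℝ X] [CompleteSpace X]
    (hrefl : Function.Surjective ⇑(inclusionInDoubleDual ℝ X))
    (D : Set X) (hD : D.Nonempty)
    (K : X → StrongDual ℝ X) (M : X → Set (StrongDual ℝ X))
    (hmax : BMaxMono (sumOp D K M))
    (hbdd : Bornology.IsBounded (D ∩ {x | (M x).Nonempty})) :
    (∀ w : StrongDual ℝ X, ∃ x, w ∈ sumOp D K M x) ∧
    ∀ x ∈ D, ∃ p, K x ∈ sumOp D K M p := by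
  have surj : ∀ w : StrongDual ℝ X, ∃ x, w ∈ sumOp D K M x := by
    intro w
    by_cases hne : ∃ x, (sumOp D K M x).Nonempty
    · obtain ⟨xb, vb, hvb⟩ := hne
      obtain ⟨R, hRb⟩ := isBounded_iff_forall_norm_le.mp hbdd
      have hR : ∀ x, (sumOp D K M x).Nonempty → ‖x‖ ≤ R := by
        rintro x ⟨u, hxD, m, hm, rfl⟩
        exact hRb x ⟨hxD, ⟨m, hm⟩⟩
      obtain ⟨x₀, hx₀⟩ := exists_related hrefl hmax.1 w hvb hR
      set A' : X → Set (StrongDual ℝ X) :=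
        fun x => sumOp D K M x ∪ {u | x = x₀ ∧ u = w} with hA'
      have hmono : BMono A' := by
        rintro x y u v (hu | ⟨hx, huw⟩) (hv | ⟨hy, hvw⟩)
        · exact hmax.1 x y u v hu hv
        · rw [hy, hvw]
          have h0 := hx₀ x u hu
          have hrw : (u - w) (x - x₀) = (w - u) (x₀ - x) := by
            simp only [ContinuousLinearMap.sub_apply, map_sub]
            ring
          rw [hrw]
          exact h0
        · rw [hx, huw]
          exact hx₀ y v hv
        · rw [hx, huw, hy, hvw]
          simp
      have hincl : ∀ x, sumOp D K M x ⊆ A' x := fun x => Set.subset_union_left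
      exact ⟨x₀, hmax.2 A' hmono hincl x₀ (Or.inr ⟨rfl, rfl⟩)⟩
    · have hempty : ∀ x, sumOp D K M x = ∅ :=
        fun x => Set.not_nonempty_iff_eq_empty.mp (fun hn => hne ⟨x, hn⟩)
      set A' : X → Set (StrongDual ℝ X) := fun _ => {w} with hA'
      have hmono : BMono A' := by
        rintro x y u v hu hv
        simp only [hA', Set.mem_singleton_iff] at hu hv
        subst hu; subst hv
        simp
      have hincl : ∀ x, sumOp D K M x ⊆ A' x := by
        intro x
        rw [hempty x]
        exact Set.empty_subset _
      exact ⟨hD.choose, hmax.2 A' hmono hincl hD.choose rfl⟩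
  exact ⟨surj, fun x _ => surj (K x)⟩
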